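/- Let k be a field, m ≥ 1, and let (L, T_L) be a finite-dimensional nilpotent representation of the cyclic quiver with m vertices such that Hom(L, S_{i+1}) = 0. Then for every a ≥ 0 one has dim_k Hom(S_i(a+1), L) = dim_k Hom(S_{i+1}(a), L) + dim_k Hom(S_i, L). -/

import Mathlib

open Module

variable (k : Type) [Field k] (m : ℕ)

/-- The space of homomorphisms between two nilpotent representations of the cyclic quiver
with `m` vertices, each encoded as a `ℤ/m`-graded vector space together with a (nilpotent)
operator homogeneous of degree `1`: a homomorphism is a linear map preserving the grading
and intertwining the two operators. -/
def RepHom {V W : Type} [AddCommGroup V] [Module k V] [AddCommGroup W] [Module k W]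
    (gV : ZMod m → Submodule k V) (TV : V →ₗ[k] V)
    (gW : ZMod m → Submodule k W) (TW : W →ₗ[k] W) : Submodule k (V →ₗ[k] W) where
  carrier := {f | (∀ j : ZMod m, ∀ v ∈ gV j, f v ∈ gW j) ∧ f ∘ₗ TV = TW ∘ₗ f}
  add_mem' := by
    rintro f g ⟨hf1, hf2⟩ ⟨hg1, hg2⟩
    refine ⟨fun j v hv => ?_, ?_⟩
    · simpa using add_mem (hf1 j v hv) (hg1 j v hv)
    · simp only [LinearMap.add_comp, LinearMap.comp_add, hf2, hg2]
  zero_mem' := ⟨fun j v hv => by simp, by simp⟩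
  smul_mem' := by
    rintro c f ⟨hf1, hf2⟩
    refine ⟨fun j v hv => ?_, ?_⟩
    · simpa using Submodule.smul_mem _ c (hf1 j v hv)
    · simp only [LinearMap.smul_comp, LinearMap.comp_smul, hf2]

/-- The shift operator `e_t ↦ e_{t+1}` (and `e_{a-1} ↦ 0`) on `k^a`; this is the underlying
nilpotent operator of the indecomposable representation `S_i(a)`. -/
def shiftMap (a : ℕ) : (Fin a → k) →ₗ[k] (Fin a → k) where
  toFun f t := if h : (t : ℕ) = 0 then 0
    else f ⟨(t : ℕ) - 1, Nat.lt_of_le_of_lt (Nat.sub_le _ _) t.isLt⟩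
  map_add' f g := by
    funext t
    by_cases h : (t : ℕ) = 0 <;> simp [h]
  map_smul' c f := by
    funext t
    by_cases h : (t : ℕ) = 0 <;> simp [h]

/-- The grading of the indecomposable representation `S_i(a)` on `k^a`: the basis vector
`e_t` is homogeneous of degree `i + t (mod m)`. -/
def sGrading (i : ZMod m) (a : ℕ) (j : ZMod m) : Submodule k (Fin a → k) where
  carrier := {f | ∀ t : Fin a, i + ((t : ℕ) : ZMod m) ≠ j → f t = 0}
  add_mem' := fun hf hg t ht => by
    rw [Pi.add_apply, hf t ht, hg t ht, add_zero]
  zero_mem' := fun t _ => rfl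
  smul_mem' := fun c f hf t ht => by rw [Pi.smul_apply, hf t ht, smul_zero]

lemma shift_single (a : ℕ) (s : Fin a) (c : k) :
    shiftMap k a (Pi.single s c) =
      if h : (s : ℕ) + 1 < a then Pi.single (⟨(s : ℕ) + 1, h⟩ : Fin a) c else 0 := by
  funext t
  simp only [shiftMap, LinearMap.coe_mk, AddHom.coe_mk]
  by_cases ht : (t : ℕ) = 0
  · rw [dif_pos ht]
    split_ifs with h
    · rw [Pi.single_apply, if_neg]
      simp only [Fin.ext_iff]
      omega
    · rfl
  · rw [dif_neg ht, Pi.single_apply]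
    by_cases he : (t : ℕ) = (s : ℕ) + 1
    · have h : (s : ℕ) + 1 < a := he ▸ t.isLt
      rw [dif_pos h, if_pos (Fin.ext (by simp; omega)), Pi.single_apply,
        if_pos (Fin.ext (by simp [he]))]
    · rw [if_neg (by simp only [Fin.ext_iff]; omega)]
      split_ifs with h
      · rw [Pi.single_apply, if_neg (by simp only [Fin.ext_iff]; omega)]
      · rfl

lemma shift_pow_single (a n : ℕ) (s : Fin a) (c : k) :
    ((shiftMap k a) ^ n) (Pi.single s c) =
      if h : (s : ℕ) + n < a then Pi.single (⟨(s : ℕ) + n, h⟩ : Fin a) c else 0 := by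
  induction n with
  | zero => simp
  | succ n ih =>
    rw [pow_succ', Module.End.mul_apply, ih]
    by_cases h1 : (s : ℕ) + n < a
    · rw [dif_pos h1, shift_single]
      by_cases h2 : (s : ℕ) + n + 1 < a
      · rw [dif_pos h2, dif_pos (show (s : ℕ) + (n + 1) < a by omega)]
        congr 1
      · rw [dif_neg h2, dif_neg (show ¬ (s : ℕ) + (n + 1) < a by omega)]
    · rw [dif_neg h1, map_zero, dif_neg (show ¬ (s : ℕ) + (n + 1) < a by omega)]

lemma single_mem_sGrading (i : ZMod m) (a : ℕ) (s : Fin a) (c : k) :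
    Pi.single s c ∈ sGrading k m i a (i + ((s : ℕ) : ZMod m)) := by
  intro t ht
  rw [Pi.single_apply, if_neg]
  intro he
  rw [he] at ht
  exact ht rfl

lemma intertwine_pow {V W : Type} [AddCommGroup V] [Module k V] [AddCommGroup W] [Module k W]
    (TV : V →ₗ[k] V) (TW : W →ₗ[k] W) (f : V →ₗ[k] W)
    (h : f ∘ₗ TV = TW ∘ₗ f) (n : ℕ) (v : V) : f ((TV ^ n) v) = (TW ^ n) (f v) := by
  induction n with
  | zero => simp
  | succ n ih =>
    have h' := LinearMap.congr_fun h ((TV ^ n) v)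
    simp only [LinearMap.comp_apply] at h'
    rw [pow_succ', Module.End.mul_apply, pow_succ', Module.End.mul_apply, h', ih]

lemma pow_deg {L : Type} [AddCommGroup L] [Module k L]
    (gL : ZMod m → Submodule k L) (TL : L →ₗ[k] L)
    (hdeg : ∀ j : ZMod m, ∀ v ∈ gL j, TL v ∈ gL (j + 1))
    (n : ℕ) (j : ZMod m) (v : L) (hv : v ∈ gL j) :
    (TL ^ n) v ∈ gL (j + ((n : ℕ) : ZMod m)) := by
  induction n with
  | zero => simpa using hv
  | succ n ih =>
    have h2 : (((n + 1 : ℕ)) : ZMod m) = ((n : ℕ) : ZMod m) + 1 := by push_cast; ring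
    rw [pow_succ', Module.End.mul_apply, h2, ← add_assoc]
    exact hdeg _ _ ih


lemma finrank_repHom_eq (L : Type) [AddCommGroup L] [Module k L] [FiniteDimensional k L]
    (gL : ZMod m → Submodule k L) (TL : L →ₗ[k] L)
    (hdeg : ∀ j : ZMod m, ∀ v ∈ gL j, TL v ∈ gL (j + 1)) (i : ZMod m) (a : ℕ) :
    finrank k (RepHom k m (sGrading k m i a) (shiftMap k a) gL TL)
      = finrank k (gL i ⊓ LinearMap.ker (TL ^ a) : Submodule k L) := by
  rcases Nat.eq_zero_or_pos a with rfl | ha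
  · have h1 : RepHom k m (sGrading k m i 0) (shiftMap k 0) gL TL = ⊥ := by
      rw [eq_bot_iff]
      rintro f -
      have hf : f = 0 := by
        apply LinearMap.ext
        intro v
        have hv : v = 0 := funext fun t => t.elim0
        rw [hv, map_zero, LinearMap.zero_apply]
      simp [hf]
    rw [h1, pow_zero, Module.End.one_eq_id, LinearMap.ker_id, inf_bot_eq, finrank_bot, finrank_bot]
  · set z : Fin a := ⟨0, ha⟩ with hz
    have hz0 : (z : ℕ) = 0 := rfl
    set E : (RepHom k m (sGrading k m i a) (shiftMap k a) gL TL) →ₗ[k] L :=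
      (LinearMap.applyₗ (Pi.single z (1 : k))).comp
        (Submodule.subtype _) with hE
    have hinj : Function.Injective E := by
      rw [← LinearMap.ker_eq_bot, eq_bot_iff]
      rintro ⟨f, hf1, hf2⟩ hker
      have h0 : f (Pi.single z (1 : k)) = 0 := hker
      have key : ∀ s : Fin a, f (Pi.single s (1 : k)) = 0 := by
        intro s
        have hlt : (z : ℕ) + (s : ℕ) < a := by rw [hz0]; omega
        have hs : ((shiftMap k a) ^ (s : ℕ)) (Pi.single z (1 : k)) = Pi.single s 1 := by
          rw [shift_pow_single, dif_pos hlt]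
          have hzs : (⟨(z : ℕ) + (s : ℕ), hlt⟩ : Fin a) = s := Fin.ext (by simp [hz0])
          rw [hzs]
        have h3 := intertwine_pow k (shiftMap k a) TL f hf2 (s : ℕ) (Pi.single z 1)
        rw [hs] at h3
        rw [h3, h0, map_zero]
      have hf0 : f = 0 := by
        apply LinearMap.pi_ext'
        intro s
        apply LinearMap.ext
        intro c
        have hsingle : (Pi.single s c : Fin a → k) = c • (Pi.single s (1 : k) : Fin a → k) := by
          funext t
          rw [Pi.smul_apply, Pi.single_apply, Pi.single_apply]
          split_ifs <;> simp
        simp only [LinearMap.comp_apply, LinearMap.coe_single, LinearMap.zero_comp,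
          LinearMap.zero_apply, hsingle, map_smul, key s, smul_zero]
      simp only [Submodule.mem_bot]
      exact Subtype.ext hf0
    have hrange : LinearMap.range E = gL i ⊓ LinearMap.ker (TL ^ a) := by
      apply le_antisymm
      · rintro x ⟨⟨f, hf1, hf2⟩, rfl⟩
        constructor
        · have hmem := single_mem_sGrading k m i a z (1 : k)
          have he : i + (((z : ℕ)) : ZMod m) = i := by rw [hz0]; simp
          rw [he] at hmem
          exact hf1 i _ hmem
        · show ((TL ^ a)) (f (Pi.single z 1)) = 0
          have h3 := intertwine_pow k (shiftMap k a) TL f hf2 a (Pi.single z 1)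
          rw [shift_pow_single, dif_neg (show ¬ (z : ℕ) + a < a by rw [hz0]; omega), map_zero] at h3
          exact h3.symm
      · rintro x ⟨hxi, hxk⟩
        replace hxk : (TL ^ a) x = 0 := hxk
        set F : (Fin a → k) →ₗ[k] L :=
          ∑ t : Fin a, LinearMap.smulRight (LinearMap.proj t) ((TL ^ (t : ℕ)) x) with hF
        have F_apply : ∀ v : Fin a → k, F v = ∑ t : Fin a, v t • ((TL ^ (t : ℕ)) x) := by
          intro v
          simp [hF]
        have F_single : ∀ (s : Fin a) (c : k), F (Pi.single s c) = c • ((TL ^ (s : ℕ)) x) := by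
          intro s c
          rw [F_apply]
          simp only [Pi.single_apply, ite_smul, zero_smul]
          rw [Finset.sum_ite_eq' Finset.univ s fun t => c • ((TL ^ (t : ℕ)) x)]
          simp
        have hFmem : F ∈ RepHom k m (sGrading k m i a) (shiftMap k a) gL TL := by
          constructor
          · intro j v hv
            rw [F_apply]
            apply Submodule.sum_mem
            intro t _
            by_cases hc : i + ((t : ℕ) : ZMod m) = j
            · exact Submodule.smul_mem _ _ (hc ▸ pow_deg k m gL TL hdeg (t : ℕ) i x hxi)
            · rw [hv t hc, zero_smul]
              exact Submodule.zero_mem _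
          · apply LinearMap.pi_ext'
            intro s
            apply LinearMap.ext
            intro c
            simp only [LinearMap.comp_apply, LinearMap.coe_single]
            rw [shift_single, F_single]
            by_cases h1 : (s : ℕ) + 1 < a
            · rw [dif_pos h1, F_single]
              show _ = TL (c • (TL ^ (s : ℕ)) x)
              rw [map_smul]
              congr 1
              show ((TL ^ ((s : ℕ) + 1))) x = _
              rw [pow_succ', Module.End.mul_apply]
            · rw [dif_neg h1, map_zero]
              show (0 : L) = TL (c • (TL ^ (s : ℕ)) x)
              rw [map_smul]
              have hsa : (s : ℕ) + 1 = a := by omega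
              have hpow : (TL ^ a) x = TL ((TL ^ (s : ℕ)) x) := by
                conv_lhs => rw [← hsa]
                rw [pow_succ', Module.End.mul_apply]
              rw [← hpow, hxk, smul_zero]
        refine ⟨⟨F, hFmem⟩, ?_⟩
        show F (Pi.single z 1) = x
        rw [F_single, hz0, pow_zero, Module.End.one_apply, one_smul]
    rw [LinearEquiv.finrank_eq (LinearEquiv.ofInjective E hinj), hrange]

lemma surj_of_hom_zero (L : Type) [AddCommGroup L] [Module k L] [FiniteDimensional k L]
    (gL : ZMod m → Submodule k L) (hgL : DirectSum.IsInternal gL)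
    (TL : L →ₗ[k] L)
    (hdeg : ∀ j : ZMod m, ∀ v ∈ gL j, TL v ∈ gL (j + 1)) (i : ZMod m)
    (hLSi : RepHom k m gL TL (sGrading k m (i + 1) 1) (shiftMap k 1) = ⊥) :
    gL (i + 1) ≤ Submodule.map TL (gL i) := by
  by_contra hcon
  rw [SetLike.not_le_iff_exists] at hcon
  obtain ⟨y, hy1, hy2⟩ := hcon
  set N : Submodule k L := Submodule.map TL (gL i) with hN
  set K' : Submodule k L := ⨆ j : ZMod m, ⨆ _ : j ≠ i + 1, gL j with hK'
  set K : Submodule k L := N ⊔ K' with hK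
  have hK'le : ∀ j : ZMod m, j ≠ i + 1 → gL j ≤ K' := by
    intro j hj
    exact le_iSup₂ (f := fun (j : ZMod m) (_ : j ≠ i + 1) => gL j) j hj
  have hNle : N ≤ gL (i + 1) := by
    rintro _ ⟨v, hv, rfl⟩
    exact hdeg i v hv
  have hyK : y ∉ K := by
    intro hyk
    rw [hK, Submodule.mem_sup] at hyk
    obtain ⟨n, hn, z', hz', hsum⟩ := hyk
    have hz1 : z' ∈ gL (i + 1) := by
      have h := Submodule.sub_mem _ hy1 (hNle hn)
      rw [← hsum] at h
      simpa using h
    have hdisj : Disjoint (gL (i + 1)) K' := hgL.submodule_iSupIndep (i + 1)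
    have hz0 : z' = 0 := Submodule.disjoint_def.mp hdisj z' hz1 hz'
    apply hy2
    rw [← hsum, hz0, add_zero]
    exact hn
  have hrangeK : ∀ v : L, TL v ∈ K := by
    intro v
    have hv : v ∈ ⨆ j, gL j := by rw [hgL.submodule_iSup_eq_top]; trivial
    refine Submodule.iSup_induction (motive := fun x => TL x ∈ K) _ hv ?_ ?_ ?_
    · intro j w hw
      by_cases hj : j = i
      · subst hj
        exact (le_sup_left : N ≤ K) (Submodule.mem_map_of_mem hw)
      · have h1 : TL w ∈ gL (j + 1) := hdeg j w hw
        have h2 : gL (j + 1) ≤ K' := hK'le (j + 1) (fun he => hj (by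
          have := add_right_cancel he
          exact this))
        exact (le_sup_right : K' ≤ K) (h2 h1)
    · simp
    · intro x y hx hy
      rw [map_add]
      exact add_mem hx hy
  have hmkQ : Submodule.mkQ K y ≠ 0 := by
    intro h0
    exact hyK (by rwa [Submodule.mkQ_apply, Submodule.Quotient.mk_eq_zero] at h0)
  obtain ⟨lam, hlam⟩ : ∃ lam : Module.Dual k (L ⧸ K), lam (Submodule.mkQ K y) ≠ 0 := by
    by_contra hall
    push_neg at hall
    exact hmkQ ((Module.forall_dual_apply_eq_zero_iff k _).mp fun φ => hall φ)
  set Φ : L →ₗ[k] (Fin 1 → k) := LinearMap.pi (fun _ => lam ∘ₗ Submodule.mkQ K) with hΦ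
  have hΦmem : Φ ∈ RepHom k m gL TL (sGrading k m (i + 1) 1) (shiftMap k 1) := by
    constructor
    · intro j v hv t ht
      by_cases hj : j = i + 1
      · exfalso
        apply ht
        have h1 : ((t : ℕ) : ZMod m) = 0 := by
          have h2 : (t : ℕ) = 0 := by omega
          rw [h2, Nat.cast_zero]
        rw [h1, add_zero, hj]
      · show lam (Submodule.mkQ K v) = 0
        have hvK : v ∈ K := (le_sup_right : K' ≤ K) (hK'le j hj hv)
        have hmk : Submodule.mkQ K v = 0 := by
          rwa [Submodule.mkQ_apply, Submodule.Quotient.mk_eq_zero]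
        rw [hmk, map_zero]
    · have hshift1 : shiftMap k 1 = 0 := by
        apply LinearMap.ext
        intro v
        funext t
        show (if h : (t : ℕ) = 0 then 0
          else v ⟨(t : ℕ) - 1, Nat.lt_of_le_of_lt (Nat.sub_le _ _) t.isLt⟩) = 0
        rw [dif_pos (by omega)]
      rw [hshift1, LinearMap.zero_comp]
      apply LinearMap.ext
      intro v
      funext t
      show lam (Submodule.mkQ K (TL v)) = 0
      have hmk : Submodule.mkQ K (TL v) = 0 := by
        rw [Submodule.mkQ_apply, Submodule.Quotient.mk_eq_zero]
        exact hrangeK v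
      rw [hmk, map_zero]
  rw [hLSi, Submodule.mem_bot] at hΦmem
  apply hlam
  have : Φ y = 0 := by rw [hΦmem]; rfl
  have h2 := congrFun this ⟨0, one_pos⟩
  exact h2

lemma finrank_inf_ker_succ (L : Type) [AddCommGroup L] [Module k L] [FiniteDimensional k L]
    (gL : ZMod m → Submodule k L) (TL : L →ₗ[k] L)
    (hdeg : ∀ j : ZMod m, ∀ v ∈ gL j, TL v ∈ gL (j + 1)) (i : ZMod m) (a : ℕ)
    (hsurj : gL (i + 1) ≤ Submodule.map TL (gL i)) :
    finrank k (gL i ⊓ LinearMap.ker (TL ^ (a + 1)) : Submodule k L)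
      = finrank k (gL (i + 1) ⊓ LinearMap.ker (TL ^ a) : Submodule k L)
        + finrank k (gL i ⊓ LinearMap.ker (TL ^ 1) : Submodule k L) := by
  have hmap : ∀ x ∈ (gL i ⊓ LinearMap.ker (TL ^ (a + 1)) : Submodule k L),
      TL x ∈ (gL (i + 1) ⊓ LinearMap.ker (TL ^ a) : Submodule k L) := by
    rintro x ⟨hx1, hx2⟩
    refine ⟨hdeg i x hx1, ?_⟩
    show (TL ^ a) (TL x) = 0
    rw [← Module.End.mul_apply, ← pow_succ]
    exact hx2
  set g := TL.restrict hmap with hg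
  have hsurjg : Function.Surjective g := by
    rintro ⟨y, hy1, hy2⟩
    obtain ⟨x, hx, hxy⟩ := hsurj hy1
    have hxmem : x ∈ (gL i ⊓ LinearMap.ker (TL ^ (a + 1)) : Submodule k L) := by
      refine ⟨hx, ?_⟩
      show (TL ^ (a + 1)) x = 0
      rw [pow_succ, Module.End.mul_apply, hxy]
      exact hy2
    refine ⟨⟨x, hxmem⟩, ?_⟩
    apply Subtype.ext
    show TL x = y
    exact hxy
  have hker : LinearMap.ker g
      = Submodule.comap (gL i ⊓ LinearMap.ker (TL ^ (a + 1))).subtype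
        (gL i ⊓ LinearMap.ker (TL ^ 1)) := by
    ext ⟨x, hx1, hx2⟩
    constructor
    · intro h
      have h0 : TL x = 0 := congrArg Subtype.val h
      exact ⟨hx1, by simpa [pow_one] using h0⟩
    · rintro ⟨-, h2⟩
      apply Subtype.ext
      show TL x = 0
      simpa [pow_one] using h2
  have hle : (gL i ⊓ LinearMap.ker (TL ^ 1) : Submodule k L)
      ≤ gL i ⊓ LinearMap.ker (TL ^ (a + 1)) := by
    rintro x ⟨h1, h2⟩
    refine ⟨h1, ?_⟩
    show (TL ^ (a + 1)) x = 0
    have h0 : TL x = 0 := by simpa [pow_one] using h2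
    rw [pow_succ, Module.End.mul_apply, h0, map_zero]
  have e1 := LinearMap.finrank_range_add_finrank_ker g
  rw [LinearMap.range_eq_top.mpr hsurjg, finrank_top, hker,
    LinearEquiv.finrank_eq (Submodule.comapSubtypeEquivOfLe hle)] at e1
  omega

/-- Let `k` be a field, `m ≥ 1`, and let `(L, T_L)` be a finite-dimensional
nilpotent representation of the cyclic quiver with `m` vertices (a `ℤ/m`-graded
finite-dimensional vector space `L` with a nilpotent operator homogeneous of degree `1`)
such that `Hom(L, S_{i+1}) = 0`. Then for every `a ≥ 0` one has
`dim_k Hom(S_i(a+1), L) = dim_k Hom(S_{i+1}(a), L) + dim_k Hom(S_i, L)`. -/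
theorem dim_hom_from_cyclic_succ (hm : 1 ≤ m)
    (L : Type) [AddCommGroup L] [Module k L] [FiniteDimensional k L]
    (gL : ZMod m → Submodule k L) (hgL : DirectSum.IsInternal gL)
    (TL : L →ₗ[k] L) (hnil : IsNilpotent TL)
    (hdeg : ∀ j : ZMod m, ∀ v ∈ gL j, TL v ∈ gL (j + 1))
    (i : ZMod m)
    (hLSi : RepHom k m gL TL (sGrading k m (i + 1) 1) (shiftMap k 1) = ⊥)
    (a : ℕ) :
    finrank k (RepHom k m (sGrading k m i (a + 1)) (shiftMap k (a + 1)) gL TL)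
      = finrank k (RepHom k m (sGrading k m (i + 1) a) (shiftMap k a) gL TL)
        + finrank k (RepHom k m (sGrading k m i 1) (shiftMap k 1) gL TL) := by
  have hsurj := surj_of_hom_zero k m L gL hgL TL hdeg i hLSi
  rw [finrank_repHom_eq k m L gL TL hdeg i (a + 1),
    finrank_repHom_eq k m L gL TL hdeg (i + 1) a,
    finrank_repHom_eq k m L gL TL hdeg i 1]
  exact finrank_inf_ker_succ k m L gL TL hdeg i a hsurj
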